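/- Let n ≥ 8 be an even integer and let 0 ≤ i ≤ n−1. The number of 2-element subsets {j,k} of {0, …, n−1} \ {i} such that n divides i + j + k equals n/2 − 1 if i is odd or n divides 3i, and equals n/2 − 2 otherwise (i.e. if i is even, i ≠ 0, and n does not divide 3i). -/

import Mathlib

/-- `pa n c` is the unique `k < n` with `n ∣ c + k`. -/
private def pa (n c : ℕ) : ℕ := (n - c % n) % n

private lemma pa_lt {n : ℕ} (hn : 0 < n) (c : ℕ) : pa n c < n :=
  Nat.mod_lt _ hn

private lemma pa_dvd {n : ℕ} (hn : 0 < n) (c : ℕ) : n ∣ c + pa n c := by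
  have h1 : n * (c / n) + c % n = c := Nat.div_add_mod c n
  have h2 : c % n < n := Nat.mod_lt _ hn
  unfold pa
  rcases Nat.eq_zero_or_pos (c % n) with h | h
  · rw [h, Nat.sub_zero, Nat.mod_self]
    exact ⟨c / n, by omega⟩
  · have h3 : (n - c % n) % n = n - c % n := Nat.mod_eq_of_lt (by omega)
    rw [h3]
    refine ⟨c / n + 1, ?_⟩
    rw [Nat.mul_add, Nat.mul_one]
    omega

private lemma cancel' {n c x y : ℕ} (h : n ∣ c + x) (h' : n ∣ c + y) :
    x % n = y % n := by
  have h1 : c + x ≡ c + y [MOD n] :=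
    (Nat.modEq_zero_iff_dvd.mpr h).trans (Nat.modEq_zero_iff_dvd.mpr h').symm
  exact Nat.ModEq.add_left_cancel' c h1

private lemma cancel {n c x y : ℕ} (hx : x < n) (hy : y < n)
    (h : n ∣ c + x) (h' : n ∣ c + y) : x = y := by
  have := cancel' h h'
  rwa [Nat.mod_eq_of_lt hx, Nat.mod_eq_of_lt hy] at this

private lemma mod_two_blocks {m x y : ℕ} (hm : 0 < m) (hx : x < m + m)
    (hy : y < m + m) (h : x % m = y % m) : x = y ∨ x = y + m ∨ y = x + m := by
  have hx3 : (x < m ∧ x % m = x) ∨ (m ≤ x ∧ x % m = x - m) := by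
    rcases Nat.lt_or_ge x m with h1 | h1
    · exact Or.inl ⟨h1, Nat.mod_eq_of_lt h1⟩
    · exact Or.inr ⟨h1, by rw [Nat.mod_eq_sub_mod h1]; exact Nat.mod_eq_of_lt (by omega)⟩
  have hy3 : (y < m ∧ y % m = y) ∨ (m ≤ y ∧ y % m = y - m) := by
    rcases Nat.lt_or_ge y m with h1 | h1
    · exact Or.inl ⟨h1, Nat.mod_eq_of_lt h1⟩
    · exact Or.inr ⟨h1, by rw [Nat.mod_eq_sub_mod h1]; exact Nat.mod_eq_of_lt (by omega)⟩
  rcases hx3 with ⟨h1, e1⟩ | ⟨h1, e1⟩ <;> rcases hy3 with ⟨h2, e2⟩ | ⟨h2, e2⟩ <;>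
    rw [e1, e2] at h <;> omega

/-- For an even integer `n ≥ 8` and `0 ≤ i < n`, the number of 2-element
subsets `{j,k}` of `{0, …, n-1} \ {i}` with `n ∣ i + j + k` equals `n/2 - 1` if
`i` is odd or `n ∣ 3i`, and `n/2 - 2` otherwise. -/
theorem count_pairs_concurrent (n : ℕ) (hn : 8 ≤ n) (heven : Even n)
    (i : ℕ) (hi : i < n) :
    ((((Finset.range n).erase i).powersetCard 2).filter
        (fun s => n ∣ i + s.sum id)).card =
      if Odd i ∨ n ∣ 3 * i then n / 2 - 1 else n / 2 - 2 := by
  obtain ⟨m, hm⟩ := heven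
  have hn0 : 0 < n := by omega
  set S := (((Finset.range n).erase i).powersetCard 2).filter
      (fun s => n ∣ i + s.sum id) with hSdef
  -- structure lemma: every member of a pair in S determines the pair
  have hstruct : ∀ s ∈ S, ∀ j ∈ s, j < n ∧ j ≠ i ∧ s = {j, pa n (i + j)} := by
    intro s hs j hj
    rw [hSdef, Finset.mem_filter, Finset.mem_powersetCard] at hs
    obtain ⟨⟨hsub, hcard⟩, hdvd⟩ := hs
    obtain ⟨a, b, hab, hs2⟩ := Finset.card_eq_two.mp hcard
    have hmemx : ∀ x ∈ s, x < n ∧ x ≠ i := by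
      intro x hx
      have := hsub hx
      rw [Finset.mem_erase, Finset.mem_range] at this
      exact ⟨this.2, this.1⟩
    obtain ⟨k, hkj, hsjk⟩ : ∃ k, k ≠ j ∧ s = {j, k} := by
      rw [hs2] at hj
      rcases Finset.mem_insert.mp hj with rfl | hj'
      · exact ⟨b, fun h => hab h.symm, hs2⟩
      · rw [Finset.mem_singleton] at hj'
        subst hj'
        exact ⟨a, fun h => hab h, by rw [hs2, Finset.pair_comm]⟩
    have hsum : s.sum id = j + k := by rw [hsjk, Finset.sum_pair (fun h => hkj h.symm)]; rfl
    have hjn := hmemx j hj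
    have hkn := hmemx k (by rw [hsjk]; simp)
    have hkpa : k = pa n (i + j) := by
      refine cancel hkn.1 (pa_lt hn0 _) ?_ (pa_dvd hn0 _)
      rw [hsum] at hdvd
      have : i + j + k = i + (j + k) := by ring
      rwa [this]
    exact ⟨hjn.1, hjn.2, by rw [hsjk, hkpa]⟩
  set A := (Finset.range n).filter
      (fun j => ¬(j = i ∨ n ∣ i + 2 * j ∨ n ∣ 2 * i + j)) with hAdef
  -- the union of the pairs in S is A
  have hA : S.biUnion id = A := by
    ext j
    simp only [Finset.mem_biUnion, id, hAdef, Finset.mem_filter, Finset.mem_range]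
    constructor
    · rintro ⟨s, hs, hj⟩
      obtain ⟨hjn, hji, hseq⟩ := hstruct s hs j hj
      refine ⟨hjn, ?_⟩
      push_neg
      have hsS := hs
      rw [hSdef, Finset.mem_filter, Finset.mem_powersetCard] at hsS
      obtain ⟨⟨hsub, hcard⟩, _⟩ := hsS
      have hkj : pa n (i + j) ≠ j := by
        intro h
        rw [hseq, h] at hcard
        simp at hcard
      have hki : pa n (i + j) ≠ i := by
        have hks : pa n (i + j) ∈ s := by rw [hseq]; simp
        have := hsub hks
        rw [Finset.mem_erase] at this
        exact this.1
      refine ⟨hji, ?_, ?_⟩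
      · intro hdj
        apply hkj
        refine cancel (pa_lt hn0 _) hjn (pa_dvd hn0 _) ?_
        have : (i + j) + j = i + 2 * j := by ring
        rwa [this]
      · intro hdj
        apply hki
        refine cancel (pa_lt hn0 _) hi (pa_dvd hn0 _) ?_
        have : (i + j) + i = 2 * i + j := by ring
        rwa [this]
    · rintro ⟨hjn, hP⟩
      push_neg at hP
      obtain ⟨hji, h1, h2⟩ := hP
      set k := pa n (i + j) with hk
      have hkn : k < n := pa_lt hn0 _
      have hkd : n ∣ (i + j) + k := pa_dvd hn0 _
      have hkj : k ≠ j := by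
        intro h
        apply h1
        have he : i + 2 * j = (i + j) + k := by omega
        rw [he]; exact hkd
      have hki : k ≠ i := by
        intro h
        apply h2
        have he : 2 * i + j = (i + j) + k := by omega
        rw [he]; exact hkd
      refine ⟨{j, k}, ?_, by simp⟩
      rw [hSdef, Finset.mem_filter, Finset.mem_powersetCard]
      refine ⟨⟨?_, ?_⟩, ?_⟩
      · intro x hx
        rw [Finset.mem_erase, Finset.mem_range]
        rcases Finset.mem_insert.mp hx with rfl | hx'
        · exact ⟨hji, hjn⟩
        · rw [Finset.mem_singleton] at hx'
          subst hx'
          exact ⟨hki, hkn⟩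
      · exact Finset.card_pair (fun h => hkj h.symm)
      · rw [Finset.sum_pair (fun h => hkj h.symm)]
        have : i + (id j + id k) = (i + j) + k := by simp; ring
        rw [this]; exact hkd
  -- pairwise disjointness gives 2 * S.card = A.card
  have hcardA : A.card = 2 * S.card := by
    rw [← hA, Finset.card_biUnion]
    · rw [Finset.sum_const_nat (m := 2), mul_comm]
      intro s hs
      have := hs
      rw [hSdef, Finset.mem_filter, Finset.mem_powersetCard] at this
      exact this.1.2
    · intro s hs t ht hst
      rw [Function.onFun, Finset.disjoint_left]
      intro j hjs hjt
      apply hst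
      rw [(hstruct s hs j hjs).2.2, (hstruct t ht j hjt).2.2]
  -- B is the complement of A in range n
  set B := (Finset.range n).filter
      (fun j => (j = i ∨ n ∣ i + 2 * j ∨ n ∣ 2 * i + j)) with hBdef
  have hBA : B.card + A.card = n := by
    rw [hBdef, hAdef, Finset.card_filter_add_card_filter_not,
      Finset.card_range]
  by_cases hodd : Odd i
  · -- case 1 : i odd, B = {i, pa n (2*i)}
    rw [if_pos (Or.inl hodd)]
    obtain ⟨d, hd⟩ := hodd
    have h2n : 2 ∣ n := ⟨m, by omega⟩
    have hBeq : B = {i, pa n (2 * i)} := by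
      ext j
      rw [hBdef, Finset.mem_filter, Finset.mem_range, Finset.mem_insert,
        Finset.mem_singleton]
      constructor
      · rintro ⟨hjn, rfl | h | h⟩
        · exact Or.inl rfl
        · exfalso
          obtain ⟨c, hc⟩ := h2n.trans h
          omega
        · exact Or.inr (cancel hjn (pa_lt hn0 _) h (pa_dvd hn0 _))
      · rintro (rfl | rfl)
        · exact ⟨hi, Or.inl rfl⟩
        · exact ⟨pa_lt hn0 _, Or.inr (Or.inr (pa_dvd hn0 _))⟩
    have hne : i ≠ pa n (2 * i) := by
      intro h
      have := pa_dvd hn0 (2 * i)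
      rw [← h] at this
      have h3 : n ∣ 3 * i := by
        have : 2 * i + i = 3 * i := by ring
        rwa [this] at ‹n ∣ 2 * i + i›
      obtain ⟨c, hc⟩ := h2n.trans h3
      omega
    have hBcard : B.card = 2 := by
      rw [hBeq, Finset.card_pair hne]
    omega
  · by_cases h3 : n ∣ 3 * i
    · -- case 2 : i even, n ∣ 3i, B = {i, j2}
      rw [if_pos (Or.inr h3)]
      obtain ⟨a, ha⟩ := Nat.not_odd_iff_even.mp hodd
      set j2 := if i < m then i + m else i - m with hj2def
      have hj2cases : (i < m ∧ j2 = i + m) ∨ (m ≤ i ∧ j2 = i - m) := by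
        rw [hj2def]; split_ifs with h <;> [exact Or.inl ⟨h, rfl⟩; exact Or.inr ⟨by omega, rfl⟩]
      have hj2dvd : n ∣ i + 2 * j2 := by
        rcases hj2cases with ⟨h, he⟩ | ⟨h, he⟩
        · have : i + 2 * j2 = 3 * i + n := by omega
          rw [this]
          exact Nat.dvd_add h3 dvd_rfl
        · have : i + 2 * j2 = 3 * i - n := by omega
          rw [this]
          exact Nat.dvd_sub h3 dvd_rfl
      have h3i : n ∣ 2 * i + i := by
        have : 2 * i + i = 3 * i := by ring
        rw [this]; exact h3
      have hma3 : m ∣ a + i := by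
        obtain ⟨c, hc⟩ := h3
        have h6 : 2 * (a + i) = 2 * (m * c) := by
          have : 3 * i = 2 * (a + i) := by omega
          rw [← this, hc, hm]; ring
        exact ⟨c, by omega⟩
      have hBeq : B = {i, j2} := by
        ext j
        rw [hBdef, Finset.mem_filter, Finset.mem_range, Finset.mem_insert,
          Finset.mem_singleton]
        constructor
        · rintro ⟨hjn, rfl | h | h⟩
          · exact Or.inl rfl
          · -- n ∣ i + 2j : j ≡ i mod m
            have hmaj : m ∣ a + j := by
              obtain ⟨c, hc⟩ := h
              have h6 : 2 * (a + j) = 2 * (m * c) := by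
                have : i + 2 * j = 2 * (a + j) := by omega
                rw [← this, hc, hm]; ring
              exact ⟨c, by omega⟩
            have hmod : j % m = i % m := cancel' hmaj hma3
            have := mod_two_blocks (m := m) (by omega) (by omega) (by omega) hmod
            rcases hj2cases with ⟨h', he⟩ | ⟨h', he⟩ <;> omega
          · exact Or.inl (cancel hjn hi h h3i)
        · rintro (rfl | rfl)
          · exact ⟨hi, Or.inl rfl⟩
          · refine ⟨by omega, Or.inr (Or.inl hj2dvd)⟩
      have hne : i ≠ j2 := by
        rcases hj2cases with ⟨h, he⟩ | ⟨h, he⟩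
        · omega
        · intro hij
          -- i = i - m forces m = 0 unless i < m; but m ≤ i so i - m < i
          omega
      have hBcard : B.card = 2 := by
        rw [hBeq, Finset.card_pair hne]
      omega
    · -- case 3 : i even, ¬ n ∣ 3i, B = {i, j1, u, u + m}
      rw [if_neg (by push_neg; exact ⟨hodd, h3⟩)]
      obtain ⟨a, ha⟩ := Nat.not_odd_iff_even.mp hodd
      have ha0 : a ≠ 0 := by
        intro h
        apply h3
        have : 3 * i = 0 := by omega
        rw [this]
        exact dvd_zero n
      have ham : a < m := by omega
      set j1 := pa n (2 * i) with hj1def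
      have hj1n : j1 < n := pa_lt hn0 _
      have hj1d : n ∣ 2 * i + j1 := pa_dvd hn0 _
      set u := m - a with hudef
      have hum : u < m := by omega
      have hiu : n ∣ i + 2 * u := ⟨1, by omega⟩
      have hiw : n ∣ i + 2 * (u + m) := ⟨2, by omega⟩
      have hdu : m ∣ a + u := ⟨1, by omega⟩
      -- distinctness
      have hij1 : i ≠ j1 := by
        intro h
        apply h3
        rw [← h] at hj1d
        have : 2 * i + i = 3 * i := by ring
        rwa [this] at hj1d
      have hiu' : i ≠ u := by
        intro h
        apply h3
        rw [← h] at hiu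
        have : i + 2 * i = 3 * i := by ring
        rwa [this] at hiu
      have hiw' : i ≠ u + m := by
        intro h
        apply h3
        rw [← h] at hiw
        have : i + 2 * i = 3 * i := by ring
        rwa [this] at hiw
      have key : ∀ x, n ∣ i + 2 * x → j1 ≠ x := by
        intro x hx hjx
        apply h3
        rw [← hjx] at hx
        have hb : n ∣ 3 * (2 * i + j1) := hj1d.mul_left 3
        have hs : n ∣ (i + 2 * j1) + (2 * i + j1) := Nat.dvd_add hx hj1d
        have := Nat.dvd_sub hb hs
        have he : 3 * (2 * i + j1) - ((i + 2 * j1) + (2 * i + j1)) = 3 * i := by ring_nf; omega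
        rwa [he] at this
      have hj1u : j1 ≠ u := key u hiu
      have hj1w : j1 ≠ u + m := key (u + m) hiw
      have huw : u ≠ u + m := by omega
      have hBeq : B = {i, j1, u, u + m} := by
        ext j
        rw [hBdef, Finset.mem_filter, Finset.mem_range]
        simp only [Finset.mem_insert, Finset.mem_singleton]
        constructor
        · rintro ⟨hjn, rfl | h | h⟩
          · exact Or.inl rfl
          · -- n ∣ i + 2j
            have hmaj : m ∣ a + j := by
              obtain ⟨c, hc⟩ := h
              have h6 : 2 * (a + j) = 2 * (m * c) := by
                have : i + 2 * j = 2 * (a + j) := by omega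
                rw [← this, hc, hm]; ring
              exact ⟨c, by omega⟩
            have hmod : j % m = u % m := cancel' hmaj hdu
            have := mod_two_blocks (m := m) (x := j) (y := u)
              (by omega) (by omega) (by omega) hmod
            omega
          · exact Or.inr (Or.inl (cancel hjn hj1n h hj1d))
        · rintro (rfl | rfl | rfl | rfl)
          · exact ⟨hi, Or.inl rfl⟩
          · exact ⟨hj1n, Or.inr (Or.inr hj1d)⟩
          · exact ⟨by omega, Or.inr (Or.inl hiu)⟩
          · exact ⟨by omega, Or.inr (Or.inl hiw)⟩
      have hBcard : B.card = 4 := by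
        rw [hBeq]
        rw [Finset.card_insert_of_notMem (by simp [hij1, hiu', hiw']),
          Finset.card_insert_of_notMem (by simp [hj1u, hj1w]),
          Finset.card_insert_of_notMem (by simp [huw]; omega),
          Finset.card_singleton]
      omega
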